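/- Let 𝔽 be a field of characteristic zero, let p, q ∈ 𝔽[x_1,…,x_n], and let {S_0, S_1, …, S_m} be an admissible cover of S_{p,q}. Then for every ℓ ∈ {0, 1, …, m}, either V_𝔽(S_0 ∪ ⋯ ∪ S_{ℓ−1}) = ∅ (the union being empty and its zero set all of 𝔽^n when ℓ = 0), or for every point s ∈ V_𝔽(S_0 ∪ ⋯ ∪ S_{ℓ−1}) one has V_𝔽(S_0 ∪ ⋯ ∪ S_ℓ) = V_𝔽(L_{a=s}(S_0) ∪ ⋯ ∪ L_{a=s}(S_ℓ)). In particular, the nonlinear polynomial system S_{p,q} defining the dispersion set F_{p,q} can be solved by successively solving linear systems. -/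

import Mathlib

open MvPolynomial

noncomputable section

variable {F : Type*} [Field F] [CharZero F] {n : ℕ}

/-- `p(x+a) - q(x)` as a polynomial in the variables `x` with coefficients in `F[a]`. -/
def shiftDiff (p q : MvPolynomial (Fin n) F) :
    MvPolynomial (Fin n) (MvPolynomial (Fin n) F) :=
  aeval (fun i => X i + C (X i)) p - map C q

/-- The set `S_{p,q} ⊆ F[a]` of coefficients of `p(x+a) - q(x)` with respect to `x`. -/
def coeffSet (p q : MvPolynomial (Fin n) F) : Set (MvPolynomial (Fin n) F) :=
  {c | ∃ α ∈ (shiftDiff p q).support, c = coeff α (shiftDiff p q)}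

/-- The zero set `V_F(P)` of a set of polynomials `P ⊆ F[a]`. -/
def zeroSet (P : Set (MvPolynomial (Fin n) F)) : Set (Fin n → F) :=
  {s | ∀ f ∈ P, eval s f = 0}

/-- The linearization `L_{a=s}(f) = H^0(f) + H^1(f) + ∑_{i≥2} H^i(f)(s)`. -/
def linearize (s : Fin n → F) (f : MvPolynomial (Fin n) F) : MvPolynomial (Fin n) F :=
  homogeneousComponent 0 f + homogeneousComponent 1 f +
    C (∑ i ∈ Finset.Icc 2 f.totalDegree, eval s (homogeneousComponent i f))

/-- `{S 0, …, S m}` is an admissible cover of `S_{p,q}`: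
the sets cover `S_{p,q}`, all members of `S 0` have total degree at most one in `a`,
and whenever `c_α ∈ S ℓ` (`1 ≤ ℓ ≤ m`) and `β > α` with `x^β` occurring in
`p(x+a) - q(x)`, then `c_β ∈ S 0 ∪ ⋯ ∪ S (ℓ-1)`. -/
def IsAdmissibleCover (p q : MvPolynomial (Fin n) F) (m : ℕ)
    (S : ℕ → Set (MvPolynomial (Fin n) F)) : Prop :=
  (⋃ i ∈ Finset.range (m + 1), S i) = coeffSet p q ∧
  (∀ c ∈ S 0, c.totalDegree ≤ 1) ∧
  (∀ ℓ, 1 ≤ ℓ → ℓ ≤ m → ∀ α ∈ (shiftDiff p q).support,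
      coeff α (shiftDiff p q) ∈ S ℓ →
      ∀ β ∈ (shiftDiff p q).support, α < β →
        coeff β (shiftDiff p q) ∈ ⋃ i ∈ Finset.range ℓ, S i)

set_option linter.unusedSectionVars false
set_option linter.unusedVariables false

noncomputable section Aux

variable {R : Type*} [CommSemiring R]

/-- The shift `x ↦ x + w` as an algebra endomorphism of `R[x]`. -/
def tauShift (w : Fin n → R) : MvPolynomial (Fin n) R →ₐ[R] MvPolynomial (Fin n) R :=
  aeval (fun i => X i + C (w i))

lemma tauShift_X (w : Fin n → R) (i : Fin n) : tauShift w (X i) = X i + C (w i) := by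
  simp [tauShift]

private lemma mul_bound {A B : MvPolynomial (Fin n) R} {δ₁ δ₂ : Fin n →₀ ℕ}
    (hA : ∀ β, ¬ β ≤ δ₁ → coeff β A = 0) (hB : ∀ β, ¬ β ≤ δ₂ → coeff β B = 0) :
    (∀ β, ¬ β ≤ δ₁ + δ₂ → coeff β (A * B) = 0) ∧
      coeff (δ₁ + δ₂) (A * B) = coeff δ₁ A * coeff δ₂ B := by
  constructor
  · intro β hβ
    rw [coeff_mul]
    apply Finset.sum_eq_zero
    rintro ⟨x1, x2⟩ hx
    rw [Finset.HasAntidiagonal.mem_antidiagonal] at hx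
    by_cases h1 : x1 ≤ δ₁
    · by_cases h2 : x2 ≤ δ₂
      · exfalso; apply hβ; rw [← hx]; exact add_le_add h1 h2
      · rw [hB _ h2, mul_zero]
    · rw [hA _ h1, zero_mul]
  · rw [coeff_mul]
    rw [Finset.sum_eq_single_of_mem (δ₁, δ₂) (Finset.HasAntidiagonal.mem_antidiagonal.mpr rfl)]
    · rintro ⟨x1, x2⟩ hx hne
      rw [Finset.HasAntidiagonal.mem_antidiagonal] at hx
      by_cases h1 : x1 ≤ δ₁
      · by_cases h2 : x2 ≤ δ₂
        · exfalso; apply hne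
          have h1' : x1 = δ₁ := by
            ext i
            have e1 := h1 i
            have e2 := h2 i
            have e3 : x1 i + x2 i = δ₁ i + δ₂ i := by
              have := DFunLike.congr_fun hx i
              simpa using this
            omega
          have h2' : x2 = δ₂ := by
            ext i
            have e1 := h1 i
            have e2 := h2 i
            have e3 : x1 i + x2 i = δ₁ i + δ₂ i := by
              have := DFunLike.congr_fun hx i
              simpa using this
            omega
          rw [h1', h2']
        · rw [hB _ h2, mul_zero]
      · rw [hA _ h1, zero_mul]

private lemma pow_bound (w : R) (i : Fin n) (k : ℕ) :
    (∀ β, ¬ β ≤ Finsupp.single i k → coeff β ((X i + C w) ^ k) = 0) ∧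
      coeff (Finsupp.single i k) ((X i + C w) ^ k) = 1 := by
  induction k with
  | zero =>
    constructor
    · intro β hβ
      rw [pow_zero, coeff_one, if_neg (fun h => hβ (by rw [← h]; exact zero_le))]
    · rw [pow_zero, Finsupp.single_zero, coeff_one, if_pos rfl]
  | succ k ih =>
    have hfac : (∀ β, ¬ β ≤ Finsupp.single i 1 → coeff β (X i + C w) = 0) ∧
        coeff (Finsupp.single i 1) (X i + C w) = 1 := by
      constructor
      · intro β hβ
        rw [coeff_add, coeff_X', coeff_C,
          if_neg (fun h => hβ (by rw [← h])),
          if_neg (fun h => hβ (by rw [← h]; exact zero_le)), add_zero]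
      · rw [coeff_add, coeff_X', if_pos rfl, coeff_C,
          if_neg (fun hh => one_ne_zero (Finsupp.single_eq_zero.1 hh.symm)), add_zero]
    have key := mul_bound (A := (X i + C w) ^ k) (B := X i + C w)
      (δ₁ := Finsupp.single i k) (δ₂ := Finsupp.single i 1) ih.1 hfac.1
    have hsingle : Finsupp.single i k + Finsupp.single i 1 = Finsupp.single i (k + 1) := by
      rw [← Finsupp.single_add]
    constructor
    · intro β hβ
      rw [pow_succ]
      apply key.1
      rw [hsingle]; exact hβ
    · rw [pow_succ, ← hsingle]
      rw [key.2, ih.2, hfac.2, one_mul]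

private lemma prod_bound (w : Fin n → R) (δ : Fin n →₀ ℕ) :
    (∀ β, ¬ β ≤ δ → coeff β (∏ i, (X i + C (w i)) ^ (δ i)) = 0) ∧
      coeff δ (∏ i, (X i + C (w i)) ^ (δ i)) = 1 := by
  have key : ∀ s : Finset (Fin n),
      (∀ β, ¬ β ≤ (∑ i ∈ s, Finsupp.single i (δ i)) →
        coeff β (∏ i ∈ s, (X i + C (w i)) ^ (δ i)) = 0) ∧
      coeff (∑ i ∈ s, Finsupp.single i (δ i)) (∏ i ∈ s, (X i + C (w i)) ^ (δ i)) = 1 := by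
    intro s
    induction s using Finset.induction with
    | empty =>
      constructor
      · intro β hβ
        simp only [Finset.prod_empty, Finset.sum_empty] at *
        rw [coeff_one, if_neg]
        intro h; apply hβ; rw [← h]
      · simp [coeff_one]
    | insert j s' hj ih =>
      rw [Finset.prod_insert hj, Finset.sum_insert hj]
      have key := mul_bound (pow_bound (w j) j (δ j)).1 ih.1
      exact ⟨key.1, by rw [key.2, (pow_bound (w j) j (δ j)).2, ih.2, one_mul]⟩
  have huniv : (∑ i : Fin n, Finsupp.single i (δ i)) = δ := by
    ext a
    rw [Finset.sum_apply']
    simp [Finsupp.single_apply, Finset.sum_ite_eq]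
  have := key Finset.univ
  rw [huniv] at this
  exact this

lemma tauShift_monomial (w : Fin n → R) (δ : Fin n →₀ ℕ) (c : R) :
    tauShift w (monomial δ c) = C c * ∏ i, (X i + C (w i)) ^ (δ i) := by
  rw [monomial_eq, map_mul]
  congr 1
  · simp [tauShift, algebraMap_eq]
  · rw [Finsupp.prod_fintype _ _ (fun i => pow_zero _)]
    rw [map_prod]
    congr 1
    ext i
    rw [map_pow, tauShift_X]

/-- Key lemma: if all coefficients of `g` strictly above `β` vanish, then shifting
does not change the coefficient at `β`. -/
lemma coeff_tauShift_of_upper {g : MvPolynomial (Fin n) R} {β : Fin n →₀ ℕ}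
    (w : Fin n → R) (h : ∀ δ, β < δ → coeff δ g = 0) :
    coeff β (tauShift w g) = coeff β g := by
  conv_lhs => rw [as_sum g]
  rw [map_sum, coeff_sum]
  rw [Finset.sum_eq_single β]
  · rw [tauShift_monomial, coeff_C_mul, (prod_bound w β).2, mul_one]
  · intro δ hδ hne
    by_cases hle : β ≤ δ
    · have : coeff δ g = 0 := h δ (lt_of_le_of_ne hle (Ne.symm hne))
      rw [this, map_zero, map_zero, coeff_zero]
    · rw [tauShift_monomial, coeff_C_mul, (prod_bound w δ).1 β hle, mul_zero]
  · intro hβ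
    rw [notMem_support_iff.1 hβ, map_zero, map_zero, coeff_zero]


lemma tauShift_tauShift (v w : Fin n → R) (g : MvPolynomial (Fin n) R) :
    tauShift v (tauShift w g) = tauShift (fun i => v i + w i) g := by
  have : (tauShift v).comp (tauShift w) = tauShift (fun i => v i + w i) := by
    apply MvPolynomial.algHom_ext
    intro i
    simp [tauShift, aeval_C, algebraMap_eq]
    ring
  exact DFunLike.congr_fun this g

lemma map_tauShift {R' : Type*} [CommSemiring R'] (φ : R →+* R') (w : Fin n → R)
    (g : MvPolynomial (Fin n) R) :
    map φ (tauShift w g) = tauShift (fun i => φ (w i)) (map φ g) := by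
  induction g using MvPolynomial.induction_on with
  | C a => simp [tauShift, aeval_C, algebraMap_eq, map_C]
  | add p q hp hq => simp only [map_add, hp, hq]
  | mul_X p i hp => simp only [map_mul, tauShift_X, map_add, map_X, map_C, hp]

end Aux

section Field1

lemma shiftDiff_eq' (p q : MvPolynomial (Fin n) F) :
    shiftDiff p q =
      tauShift (fun i => (X i : MvPolynomial (Fin n) F)) (map C p) - map C q := by
  unfold shiftDiff
  congr 1
  induction p using MvPolynomial.induction_on with
  | C a => simp [tauShift, aeval_C, algebraMap_eq, map_C]
  | add p q hp hq => simp only [map_add, hp, hq]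
  | mul_X p i hp => simp only [map_mul, tauShift_X, map_X, aeval_X, hp, map_mul]

lemma eval_coeff_shiftDiff (p q : MvPolynomial (Fin n) F) (s : Fin n → F) (α : Fin n →₀ ℕ) :
    eval s (coeff α (shiftDiff p q)) = coeff α (tauShift s p) - coeff α q := by
  have hmap : map (eval s : MvPolynomial (Fin n) F →+* F) (shiftDiff p q)
      = tauShift s p - q := by
    rw [shiftDiff_eq', map_sub, map_tauShift, map_map]
    have h1 : (eval s : MvPolynomial (Fin n) F →+* F).comp
        (C : F →+* MvPolynomial (Fin n) F) = RingHom.id F := by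
      ext x; simp
    have h2 : (fun i => (eval s : MvPolynomial (Fin n) F →+* F) (X i)) = s := by
      funext i; simp
    rw [h1, map_id, h2, map_map, h1, map_id]
  rw [← coeff_map, hmap, coeff_sub]

end Field1


noncomputable section Eps

/-- `g(x + ε u)` as a polynomial in `x` with coefficients in `F[ε]`. -/
def psiShift (u : Fin n → F) (g : MvPolynomial (Fin n) F) :
    MvPolynomial (Fin n) (Polynomial F) :=
  tauShift (fun i => Polynomial.C (u i) * Polynomial.X) (map Polynomial.C g)

lemma map_eval_psiShift (u : Fin n → F) (c : F) (g : MvPolynomial (Fin n) F) :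
    map (Polynomial.evalRingHom c) (psiShift u g) = tauShift (fun i => u i * c) g := by
  unfold psiShift
  rw [map_tauShift, map_map]
  have h1 : (Polynomial.evalRingHom c).comp (Polynomial.C) = RingHom.id F := by
    ext x; simp
  have hv : (fun i => (Polynomial.evalRingHom c) (Polynomial.C (u i) * Polynomial.X))
      = fun i => u i * c := by
    funext i; simp
  rw [h1, map_id, hv]

lemma eval_coeff_psiShift (u : Fin n → F) (c : F) (g : MvPolynomial (Fin n) F)
    (α : Fin n →₀ ℕ) :
    Polynomial.eval c (coeff α (psiShift u g)) = coeff α (tauShift (fun i => u i * c) g) := by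
  rw [← map_eval_psiShift u c g, coeff_map]; rfl

/-- The substitution `ε ↦ ε + 1` as a ring hom of `F[ε]`. -/
def thetaHom : Polynomial F →+* Polynomial F :=
  Polynomial.eval₂RingHom Polynomial.C (Polynomial.X + 1)

lemma thetaHom_apply (f : Polynomial F) : thetaHom f = f.comp (Polynomial.X + 1) := rfl

lemma map_theta_psiShift (u : Fin n → F) (g : MvPolynomial (Fin n) F) :
    map (thetaHom) (psiShift u g) = psiShift u (tauShift u g) := by
  unfold psiShift
  rw [map_tauShift, map_map, map_tauShift, tauShift_tauShift]
  have h1 : (thetaHom (F := F)).comp Polynomial.C = Polynomial.C := by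
    ext x; simp [thetaHom]
  rw [h1]
  have hv : (fun i => thetaHom (Polynomial.C (u i) * Polynomial.X))
      = fun i => Polynomial.C (u i) * Polynomial.X + Polynomial.C (u i) := by
    funext i
    simp [thetaHom]
    ring
  rw [hv]

/-- Extraction of the `ε^k`-layer. -/
def lam (k : ℕ) (Q : MvPolynomial (Fin n) (Polynomial F)) : MvPolynomial (Fin n) F :=
  ∑ β ∈ Q.support, monomial β ((coeff β Q).coeff k)

lemma coeff_lam (k : ℕ) (Q : MvPolynomial (Fin n) (Polynomial F)) (β : Fin n →₀ ℕ) :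
    coeff β (lam k Q) = (coeff β Q).coeff k := by
  unfold lam
  rw [coeff_sum]
  simp only [coeff_monomial]
  rw [Finset.sum_eq_single β (fun δ _ hne => if_neg hne)
    (fun hβ => by rw [if_pos rfl, notMem_support_iff.1 hβ, Polynomial.coeff_zero])]
  rw [if_pos rfl]

lemma lam_add (k : ℕ) (Q Q' : MvPolynomial (Fin n) (Polynomial F)) :
    lam k (Q + Q') = lam k Q + lam k Q' := by
  apply MvPolynomial.ext; intro β
  simp [coeff_lam, coeff_add]

lemma lam_monomial (k : ℕ) (δ : Fin n →₀ ℕ) (c : Polynomial F) :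
    lam k (monomial δ c) = monomial δ (c.coeff k) := by
  apply MvPolynomial.ext; intro β
  rw [coeff_lam, coeff_monomial, coeff_monomial]
  split <;> simp

lemma lam_tauShift (k : ℕ) (v : Fin n → F) (Q : MvPolynomial (Fin n) (Polynomial F)) :
    lam k (tauShift (fun i => Polynomial.C (v i)) Q) = tauShift v (lam k Q) := by
  induction Q using MvPolynomial.induction_on' with
  | add p q hp hq => rw [map_add, lam_add, lam_add, hp, hq, map_add]
  | monomial δ c =>
    rw [lam_monomial, tauShift_monomial, tauShift_monomial]
    have hprod : (∏ i, (X i + C (Polynomial.C (v i))) ^ (δ i))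
        = map (Polynomial.C : F →+* Polynomial F) (∏ i, (X i + C (v i)) ^ (δ i)) := by
      rw [map_prod]
      apply Finset.prod_congr rfl
      intro i _
      rw [map_pow, map_add, map_X, map_C]
    rw [hprod]
    apply MvPolynomial.ext; intro β
    rw [coeff_lam, coeff_C_mul, coeff_map, coeff_C_mul]
    rw [mul_comm c, Polynomial.coeff_C_mul, mul_comm]

lemma poly_affine {h : Polynomial F} {c : F}
    (hc : h.comp (Polynomial.X + 1) - h = Polynomial.C c) :
    h = Polynomial.C (h.coeff 0) + Polynomial.C c * Polynomial.X := by
  have hval : ∀ k : ℕ, h.eval (k : F) = h.coeff 0 + c * k := by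
    intro k
    induction k with
    | zero => simp [Polynomial.coeff_zero_eq_eval_zero]
    | succ k ih =>
      have h2 := congrArg (Polynomial.eval (k : F)) hc
      simp only [Polynomial.eval_sub, Polynomial.eval_comp, Polynomial.eval_add,
        Polynomial.eval_X, Polynomial.eval_one, Polynomial.eval_C] at h2
      have h3 := sub_eq_iff_eq_add.mp h2
      push_cast
      rw [h3, ih]; ring
  have hz : h - (Polynomial.C (h.coeff 0) + Polynomial.C c * Polynomial.X) = 0 := by
    apply Polynomial.eq_zero_of_infinite_isRoot
    apply Set.infinite_of_injective_forall_mem (f := fun k : ℕ => (k : F)) Nat.cast_injective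
    intro k
    simp only [Set.mem_setOf_eq, Polynomial.IsRoot, Polynomial.eval_sub, Polynomial.eval_add,
      Polynomial.eval_C, Polynomial.eval_mul, Polynomial.eval_X, hval k]
    ring
  exact eq_of_sub_eq_zero hz

/-- `f(ε u)` as a univariate polynomial in `ε`. -/
def lineEval (u : Fin n → F) (f : MvPolynomial (Fin n) F) : Polynomial F :=
  aeval (fun i => Polynomial.C (u i) * Polynomial.X) f

lemma homogeneousComponent_monomial' (k : ℕ) (δ : Fin n →₀ ℕ) (c : F) :
    homogeneousComponent k (monomial δ c)
      = if δ.degree = k then monomial δ c else 0 := by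
  apply MvPolynomial.ext; intro β
  rw [coeff_homogeneousComponent, apply_ite (coeff β), coeff_zero]
  by_cases hd : δ.degree = k
  · by_cases hb : β.degree = k
    · rw [if_pos hd, if_pos hb]
    · rw [if_pos hd, if_neg hb, coeff_monomial, if_neg (fun (h : δ = β) => hb (h ▸ hd))]
  · by_cases hb : β.degree = k
    · rw [if_neg hd, if_pos hb, coeff_monomial, if_neg (fun (h : δ = β) => hd (h.symm ▸ hb))]
    · rw [if_neg hd, if_neg hb]

lemma coeff_lineEval (u : Fin n → F) (f : MvPolynomial (Fin n) F) (k : ℕ) :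
    (lineEval u f).coeff k = eval u (homogeneousComponent k f) := by
  induction f using MvPolynomial.induction_on' with
  | add p q hp hq =>
    simp only [lineEval] at hp hq ⊢
    rw [map_add, Polynomial.coeff_add, hp, hq, map_add, map_add]
  | monomial δ c =>
    rw [lineEval, aeval_monomial, homogeneousComponent_monomial']
    have hprod : (δ.prod fun i e => (Polynomial.C (u i) * Polynomial.X) ^ e)
        = Polynomial.C (δ.prod fun i e => u i ^ e) * Polynomial.X ^ δ.degree := by
      rw [Finsupp.prod, Finsupp.prod, Finsupp.degree]
      simp only [mul_pow, ← Polynomial.C_pow]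
      rw [Finset.prod_mul_distrib, ← map_prod, Finset.prod_pow_eq_pow_sum]
      rfl
    rw [hprod]
    have : (algebraMap F (Polynomial F)) c = Polynomial.C c := rfl
    rw [this, ← mul_assoc, ← Polynomial.C_mul, Polynomial.coeff_C_mul,
      Polynomial.coeff_X_pow, apply_ite (eval u), map_zero, eval_monomial]
    by_cases hk : δ.degree = k
    · rw [if_pos hk, if_pos hk.symm, mul_one]
    · rw [if_neg hk, if_neg (fun h => hk h.symm), mul_zero]

end Eps

noncomputable section PartV

set_option linter.unusedSectionVars false

lemma degree_one_classify {δ : Fin n →₀ ℕ} (h : δ.degree = 1) :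
    ∃ i, δ = Finsupp.single i 1 := by
  have hne : δ ≠ 0 := by
    intro h0
    rw [h0, map_zero] at h
    omega
  obtain ⟨i, hi⟩ : ∃ i, δ i ≠ 0 := by
    by_contra hall
    push_neg at hall
    exact hne (Finsupp.ext fun a => hall a)
  have h1 : δ i ≤ 1 := h ▸ Finsupp.le_degree i δ
  have hδi : δ i = 1 := le_antisymm h1 (Nat.one_le_iff_ne_zero.2 hi)
  refine ⟨i, ?_⟩
  ext j
  rcases eq_or_ne j i with rfl | hj
  · simp [hδi, Finsupp.single_apply]
  · rw [Finsupp.single_apply, if_neg (fun hh => hj hh.symm)]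
    by_contra hj0
    have hij : ({i, j} : Finset (Fin n)) ⊆ δ.support := by
      intro x hx
      rcases Finset.mem_insert.1 hx with rfl | hx
      · exact Finsupp.mem_support_iff.2 hi
      · rw [Finset.mem_singleton] at hx
        subst hx
        exact Finsupp.mem_support_iff.2 hj0
    have h2 : 2 ≤ δ.degree := by
      calc 2 ≤ δ i + δ j := by omega
        _ = ∑ k ∈ ({i, j} : Finset (Fin n)), δ k := (Finset.sum_pair (fun hh => hj hh.symm)).symm
        _ ≤ δ.degree := Finset.sum_le_sum_of_subset hij
    omega

lemma eval_H1_sub (f : MvPolynomial (Fin n) F) (s t : Fin n → F) :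
    eval t (homogeneousComponent 1 f) - eval s (homogeneousComponent 1 f)
      = eval (fun i => t i - s i) (homogeneousComponent 1 f) := by
  rw [homogeneousComponent_apply]
  rw [map_sum, map_sum, map_sum, ← Finset.sum_sub_distrib]
  apply Finset.sum_congr rfl
  intro d hd
  have hd1 : d.degree = 1 := (Finset.mem_filter.1 hd).2
  obtain ⟨i, rfl⟩ := degree_one_classify hd1
  rw [eval_monomial, eval_monomial, eval_monomial,
    Finsupp.prod_single_index (by rw [pow_zero]),
    Finsupp.prod_single_index (by rw [pow_zero]),
    Finsupp.prod_single_index (by rw [pow_zero]), pow_one, pow_one, pow_one]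
  ring

lemma eval_linearize (s t : Fin n → F) (f : MvPolynomial (Fin n) F) :
    eval t (linearize s f)
      = eval s f
        + (eval t (homogeneousComponent 1 f) - eval s (homogeneousComponent 1 f)) := by
  have hsum : eval s f
      = ∑ i ∈ Finset.range (f.totalDegree + 1), eval s (homogeneousComponent i f) := by
    conv_lhs => rw [← sum_homogeneousComponent f]
    rw [map_sum]
  have hsplit : eval s f
      = eval s (homogeneousComponent 0 f) + eval s (homogeneousComponent 1 f)
        + ∑ i ∈ Finset.Icc 2 f.totalDegree, eval s (homogeneousComponent i f) := by
    rw [hsum]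
    rcases Nat.lt_or_ge f.totalDegree 1 with hD | hD
    · have hD0 : f.totalDegree = 0 := by omega
      rw [hD0]
      rw [Finset.Icc_eq_empty (by omega), Finset.sum_empty, add_zero,
        Finset.range_one, Finset.sum_singleton,
        homogeneousComponent_eq_zero 1 f (by omega), map_zero, add_zero]
    · have hins : Finset.range (f.totalDegree + 1)
          = insert 0 (insert 1 (Finset.Icc 2 f.totalDegree)) := by
        ext x
        simp only [Finset.mem_range, Finset.mem_insert, Finset.mem_Icc]
        omega
      rw [hins, Finset.sum_insert (by simp), Finset.sum_insert (by simp), add_assoc]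
  unfold linearize
  rw [map_add, map_add, eval_C, homogeneousComponent_zero, eval_C]
  have h0 : eval s (homogeneousComponent 0 f) = coeff 0 f := by
    rw [homogeneousComponent_zero, eval_C]
  rw [hsplit, h0]
  ring

lemma linearize_of_totalDegree_le_one {f : MvPolynomial (Fin n) F} (hf : f.totalDegree ≤ 1)
    (s : Fin n → F) : linearize s f = f := by
  unfold linearize
  rw [Finset.Icc_eq_empty (by omega), Finset.sum_empty, map_zero, add_zero]
  rcases Nat.le_one_iff_eq_zero_or_eq_one.1 hf with hD | hD
  · rw [homogeneousComponent_eq_zero 1 f (by omega), add_zero]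
    have := sum_homogeneousComponent f
    rw [hD, Finset.range_one, Finset.sum_singleton] at this
    rw [this]
  · have := sum_homogeneousComponent f
    rw [hD, Finset.sum_range_succ, Finset.sum_range_one] at this
    rw [this]

end PartV

noncomputable section PartVI

set_option linter.unusedSectionVars false

lemma eval_lineEval (u : Fin n → F) (c : F) (f : MvPolynomial (Fin n) F) :
    Polynomial.eval c (lineEval u f) = eval (fun i => u i * c) f := by
  induction f using MvPolynomial.induction_on with
  | C a => simp [lineEval]
  | add p q hp hq => simp only [lineEval, map_add, Polynomial.eval_add] at *; rw [hp, hq]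
  | mul_X p i hp =>
    simp only [lineEval, map_mul, Polynomial.eval_mul, aeval_X, eval_X] at *
    rw [hp]
    simp

lemma claimA (p q : MvPolynomial (Fin n) F) (α : Fin n →₀ ℕ) (s t : Fin n → F)
    (hs : ∀ β, α < β → coeff β (tauShift s p) = coeff β q)
    (ht : ∀ β, α < β → coeff β (tauShift t p) = coeff β q) :
    eval t (linearize s (coeff α (shiftDiff p q))) = eval t (coeff α (shiftDiff p q)) := by
  set u : Fin n → F := fun i => t i - s i with hu
  have hust : (fun i => u i + s i) = t := by funext i; simp [hu]
  set r : MvPolynomial (Fin n) F := tauShift s p with hr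
  set g : MvPolynomial (Fin n) F := tauShift u r - r with hg
  have hgv : ∀ β, α < β → coeff β g = 0 := by
    intro β hβ
    rw [hg, coeff_sub, hr, tauShift_tauShift, hust, hs β hβ, ht β hβ, sub_self]
  have hgvC : ∀ δ, α < δ → coeff δ (map (Polynomial.C : F →+* Polynomial F) g) = 0 := by
    intro δ hδ
    rw [coeff_map, hgv δ hδ, map_zero]
  have hpsi_sub : psiShift u g = psiShift u (tauShift u r) - psiShift u r := by
    unfold psiShift
    rw [hg, map_sub, map_sub]
  -- the coefficient at α of the shifted family, as a polynomial in ε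
  set e1 : Polynomial F := coeff α (psiShift u r) with he1
  have h2a : e1.comp (Polynomial.X + 1) - e1 = Polynomial.C (coeff α g) := by
    have hcomp : e1.comp (Polynomial.X + 1) = coeff α (psiShift u (tauShift u r)) := by
      rw [← map_theta_psiShift, coeff_map, thetaHom_apply, he1]
    rw [hcomp, he1, ← coeff_sub, ← hpsi_sub]
    unfold psiShift
    rw [coeff_tauShift_of_upper _ (fun δ hδ => hgvC δ hδ), coeff_map]
  have haff := poly_affine h2a
  -- the ε¹-layer of the shifted family
  set q1 : MvPolynomial (Fin n) F := lam 1 (psiShift u r) with hq1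
  have hq1v : ∀ β, α < β → coeff β q1 = 0 := by
    intro β hβ
    rw [hq1, coeff_lam]
    have hb : (coeff β (psiShift u r)).comp (Polynomial.X + 1) - coeff β (psiShift u r)
        = Polynomial.C (0 : F) := by
      have hcompβ : (coeff β (psiShift u r)).comp (Polynomial.X + 1)
          = coeff β (psiShift u (tauShift u r)) := by
        rw [← map_theta_psiShift, coeff_map, thetaHom_apply]
      rw [hcompβ, ← coeff_sub, ← hpsi_sub]
      unfold psiShift
      rw [coeff_tauShift_of_upper _ (fun δ hδ => hgvC δ (lt_trans hβ hδ)), coeff_map,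
        hgv β hβ]
    have haffβ := poly_affine hb
    rw [haffβ]
    simp
  -- comparison of the ε¹-coefficients at base points s and 0
  have h4b : psiShift u p = tauShift (fun i => Polynomial.C (-(s i))) (psiShift u r) := by
    unfold psiShift
    rw [hr, map_tauShift (Polynomial.C : F →+* Polynomial F) s p, tauShift_tauShift,
      tauShift_tauShift]
    have hv : (fun i => Polynomial.C (-(s i))
          + Polynomial.C (u i) * Polynomial.X + Polynomial.C (s i))
        = fun i => Polynomial.C (u i) * Polynomial.X := by
      funext i
      rw [map_neg]
      ring
    rw [hv]
  have he1c : e1.coeff 1 = coeff α g := by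
    rw [haff]
    simp
  have h4d : (coeff α (psiShift u p)).coeff 1 = coeff α g := by
    rw [← coeff_lam 1, h4b, lam_tauShift, coeff_tauShift_of_upper _ (fun δ hδ => hq1v δ hδ),
      hq1, coeff_lam, ← he1, he1c]
  -- identification with the homogeneous expansion of the coefficient polynomial
  set cα := coeff α (shiftDiff p q) with hcα
  have h5 : lineEval u cα = coeff α (psiShift u p) - Polynomial.C (coeff α q) := by
    apply Polynomial.funext
    intro c
    rw [Polynomial.eval_sub, Polynomial.eval_C, eval_coeff_psiShift, eval_lineEval, hcα,
      eval_coeff_shiftDiff]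
  have h6 : eval u (homogeneousComponent 1 cα) = coeff α g := by
    rw [← coeff_lineEval, h5, Polynomial.coeff_sub, Polynomial.coeff_C,
      if_neg (one_ne_zero), sub_zero, h4d]
  have h3 : eval t cα - eval s cα = coeff α g := by
    rw [hcα, eval_coeff_shiftDiff, eval_coeff_shiftDiff, hg, coeff_sub, hr, tauShift_tauShift,
      hust]
    ring
  rw [eval_linearize, eval_H1_sub, ← hu, h6, ← h3]
  ring

end PartVI

noncomputable section PartVII

set_option linter.unusedSectionVars false

lemma zeroSet_antitone {P Q : Set (MvPolynomial (Fin n) F)} (h : P ⊆ Q) :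
    zeroSet Q ⊆ zeroSet P :=
  fun s hs f hf => hs f (h hf)

lemma iUnion_range_mono (S : ℕ → Set (MvPolynomial (Fin n) F)) {L L' : ℕ} (h : L ≤ L') :
    (⋃ i ∈ Finset.range L, S i) ⊆ ⋃ i ∈ Finset.range L', S i := by
  intro f hf
  simp only [Set.mem_iUnion] at hf ⊢
  obtain ⟨i, hi, hf⟩ := hf
  exact ⟨i, Finset.mem_range.2 (lt_of_lt_of_le (Finset.mem_range.1 hi) h), hf⟩

lemma upper_coeff_eq (p q : MvPolynomial (Fin n) F) (m : ℕ)
    (S : ℕ → Set (MvPolynomial (Fin n) F)) (hS : IsAdmissibleCover p q m S)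
    {i L : ℕ} (hi1 : 1 ≤ i) (him : i ≤ m) (hiL : i ≤ L)
    {α : Fin n →₀ ℕ} (hα : α ∈ (shiftDiff p q).support)
    (hc : coeff α (shiftDiff p q) ∈ S i)
    {s : Fin n → F} (hsz : s ∈ zeroSet (⋃ j ∈ Finset.range L, S j)) :
    ∀ β, α < β → coeff β (tauShift s p) = coeff β q := by
  intro β hβ
  have hzero : eval s (coeff β (shiftDiff p q)) = 0 := by
    by_cases hmem : β ∈ (shiftDiff p q).support
    · have hin := hS.2.2 i hi1 him α hα hc β hmem hβ
      apply hsz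
      simp only [Set.mem_iUnion] at hin ⊢
      obtain ⟨j, hj, hin⟩ := hin
      exact ⟨j, Finset.mem_range.2 (lt_of_lt_of_le (Finset.mem_range.1 hj) hiL), hin⟩
    · rw [notMem_support_iff.1 hmem, map_zero]
  rw [eval_coeff_shiftDiff] at hzero
  exact sub_eq_zero.1 hzero

lemma lin_eval_eq (p q : MvPolynomial (Fin n) F) (m : ℕ)
    (S : ℕ → Set (MvPolynomial (Fin n) F)) (hS : IsAdmissibleCover p q m S)
    {L : ℕ} (hLm : L ≤ m) {i : ℕ} (hi : i ≤ L)
    {s t : Fin n → F} (hsz : s ∈ zeroSet (⋃ j ∈ Finset.range L, S j))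
    (htz : t ∈ zeroSet (⋃ j ∈ Finset.range L, S j))
    {c : MvPolynomial (Fin n) F} (hc : c ∈ S i) :
    eval t (linearize s c) = eval t c := by
  rcases Nat.eq_zero_or_pos i with rfl | hi1
  · rw [linearize_of_totalDegree_le_one (hS.2.1 c hc) s]
  · have hcov : c ∈ coeffSet p q := by
      rw [← hS.1]
      simp only [Set.mem_iUnion]
      exact ⟨i, Finset.mem_range.2 (by omega), hc⟩
    obtain ⟨α, hα, hceq⟩ := hcov
    subst hceq
    exact claimA p q α s t
      (upper_coeff_eq p q m S hS hi1 (le_trans hi hLm) hi hα hc hsz)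
      (upper_coeff_eq p q m S hS hi1 (le_trans hi hLm) hi hα hc htz)

theorem admissibleCover_linearization' (p q : MvPolynomial (Fin n) F) (m : ℕ)
    (S : ℕ → Set (MvPolynomial (Fin n) F))
    (hS : IsAdmissibleCover p q m S) :
    ∀ ℓ ≤ m,
      zeroSet (⋃ i ∈ Finset.range ℓ, S i) = ∅ ∨
      ∀ s ∈ zeroSet (⋃ i ∈ Finset.range ℓ, S i),
        zeroSet (⋃ i ∈ Finset.range (ℓ + 1), S i) =
          zeroSet (⋃ i ∈ Finset.range (ℓ + 1), linearize s '' S i) := by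
  have key : ∀ ℓ, ℓ ≤ m → ∀ s ∈ zeroSet (⋃ i ∈ Finset.range ℓ, S i),
      zeroSet (⋃ i ∈ Finset.range (ℓ + 1), S i) =
        zeroSet (⋃ i ∈ Finset.range (ℓ + 1), linearize s '' S i) := by
    intro ℓ
    induction ℓ with
    | zero =>
      intro _ s _
      have hset : (⋃ i ∈ Finset.range 1, linearize s '' S i)
          = ⋃ i ∈ Finset.range 1, S i := by
        ext f
        simp only [Set.mem_iUnion, Finset.mem_range, Nat.lt_one_iff, Set.mem_image]
        constructor
        · rintro ⟨i, rfl, c, hc, rfl⟩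
          exact ⟨0, rfl, by
            rw [linearize_of_totalDegree_le_one (hS.2.1 c hc) s]; exact hc⟩
        · rintro ⟨i, rfl, hcmem⟩
          exact ⟨0, rfl, f, hcmem,
            linearize_of_totalDegree_le_one (hS.2.1 f hcmem) s⟩
      rw [hset]
    | succ ℓ ih =>
      intro hm s hsz
      have hsz' : s ∈ zeroSet (⋃ i ∈ Finset.range ℓ, S i) :=
        zeroSet_antitone (iUnion_range_mono S (Nat.le_succ ℓ)) hsz
      have hIH := ih (by omega) s hsz'
      apply Set.Subset.antisymm
      · intro t ht f hf
        have htz : t ∈ zeroSet (⋃ i ∈ Finset.range (ℓ + 1), S i) :=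
          zeroSet_antitone (iUnion_range_mono S (Nat.le_succ (ℓ + 1))) ht
        simp only [Set.mem_iUnion, Set.mem_image] at hf
        obtain ⟨i, hi, c, hc, rfl⟩ := hf
        rw [lin_eval_eq p q m S hS hm (by
          exact Nat.lt_succ_iff.1 (Finset.mem_range.1 hi)) hsz htz hc]
        apply ht
        simp only [Set.mem_iUnion]
        exact ⟨i, hi, hc⟩
      · intro t ht f hf
        have htz : t ∈ zeroSet (⋃ i ∈ Finset.range (ℓ + 1), S i) := by
          rw [hIH]
          exact zeroSet_antitone
            (iUnion_range_mono (fun i => linearize s '' S i) (Nat.le_succ (ℓ + 1))) ht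
        simp only [Set.mem_iUnion] at hf
        obtain ⟨i, hi, hc⟩ := hf
        rw [← lin_eval_eq p q m S hS hm (by
          exact Nat.lt_succ_iff.1 (Finset.mem_range.1 hi)) hsz htz hc]
        apply ht
        simp only [Set.mem_iUnion, Set.mem_image]
        exact ⟨i, hi, f, hc, rfl⟩
  intro ℓ hℓ
  exact Or.inr (key ℓ hℓ)

end PartVII

/-- For an admissible cover `{S 0, …, S m}` of `S_{p,q}`,
for every `ℓ ≤ m` either the zero set of `S 0 ∪ ⋯ ∪ S (ℓ-1)` is empty, or for every point
`s` of that zero set, the zero set of `S 0 ∪ ⋯ ∪ S ℓ` coincides with the zero set of the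
linearized system `L_{a=s}(S 0) ∪ ⋯ ∪ L_{a=s}(S ℓ)`. -/
theorem admissibleCover_linearization (p q : MvPolynomial (Fin n) F) (m : ℕ)
    (S : ℕ → Set (MvPolynomial (Fin n) F))
    (hS : IsAdmissibleCover p q m S) :
    ∀ ℓ ≤ m,
      zeroSet (⋃ i ∈ Finset.range ℓ, S i) = ∅ ∨
      ∀ s ∈ zeroSet (⋃ i ∈ Finset.range ℓ, S i),
        zeroSet (⋃ i ∈ Finset.range (ℓ + 1), S i) =
          zeroSet (⋃ i ∈ Finset.range (ℓ + 1), linearize s '' S i) := by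
  exact admissibleCover_linearization' p q m S hS

end
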